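/- Suppose φ : ℂ[z] → ℂ[z] is the algebra endomorphism of substitution by a polynomial φ(z), and J is the coefficient-conjugation involution. If the composition of the substitution by Jφ with the substitution by φ is the identity map on ℂ[z], then φ(z) = a z + b with |a| = 1 and a·conj(b) + b = 0. -/

import Mathlib

open Polynomial

/-- If the composition of substitution by `Jφ` (coefficientwise conjugation of `φ`)
with substitution by `φ` is the identity on `ℂ[z]`, then `φ = a z + b` with `|a| = 1` and
`a * conj b + b = 0`. -/
theorem subst_conj_comp_subst_id
    (φ : Polynomial ℂ)
    (h : ∀ p : Polynomial ℂ, (p.comp φ).comp (φ.map (starRingEnd ℂ)) = p) :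
    ∃ a b : ℂ, φ = Polynomial.C a * Polynomial.X + Polynomial.C b ∧
      ‖a‖ = 1 ∧ a * (starRingEnd ℂ) b + b = 0 := by
  have hX := h Polynomial.X
  rw [Polynomial.X_comp] at hX
  -- degree argument
  have hdeg : φ.natDegree * (φ.map (starRingEnd ℂ)).natDegree = 1 := by
    rw [← Polynomial.natDegree_comp, hX, Polynomial.natDegree_X]
  have hmapdeg : (φ.map (starRingEnd ℂ)).natDegree = φ.natDegree :=
    Polynomial.natDegree_map_eq_of_injective (RingHom.injective _) φ
  rw [hmapdeg] at hdeg
  have hd1 : φ.natDegree = 1 := by nlinarith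
  refine ⟨φ.coeff 1, φ.coeff 0, ?_, ?_, ?_⟩
  · exact (Polynomial.eq_X_add_C_of_natDegree_le_one hd1.le)
  · have h1 : (φ.comp (φ.map (starRingEnd ℂ))).coeff 1 = (Polynomial.X : Polynomial ℂ).coeff 1 := by
      rw [hX]
    have hφ := Polynomial.eq_X_add_C_of_natDegree_le_one hd1.le
    rw [Polynomial.coeff_X_one] at h1
    nth_rewrite 1 [hφ] at h1
    nth_rewrite 1 [hφ] at h1
    simp only [Polynomial.map_add, Polynomial.map_mul, Polynomial.map_C, Polynomial.map_X,
      Polynomial.add_comp, Polynomial.mul_comp, Polynomial.C_comp, Polynomial.X_comp] at h1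
    have h1' : φ.coeff 1 * (starRingEnd ℂ) (φ.coeff 1) = 1 := by
      have := h1
      simpa [mul_add, Polynomial.coeff_add, Polynomial.coeff_C_mul, Polynomial.coeff_X_one,
        Polynomial.coeff_C] using this
    have hn : Complex.normSq (φ.coeff 1) = 1 := by
      have := h1'
      rw [Complex.mul_conj] at this
      exact_mod_cast this
    have : (‖φ.coeff 1‖)^2 = 1 := by rw [Complex.sq_norm, hn]
    nlinarith [norm_nonneg (φ.coeff 1)]
  · have h0 : (φ.comp (φ.map (starRingEnd ℂ))).coeff 0 = (Polynomial.X : Polynomial ℂ).coeff 0 := by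
      rw [hX]
    have hφ := Polynomial.eq_X_add_C_of_natDegree_le_one hd1.le
    rw [Polynomial.coeff_X_zero] at h0
    nth_rewrite 1 [hφ] at h0
    nth_rewrite 1 [hφ] at h0
    simp only [Polynomial.map_add, Polynomial.map_mul, Polynomial.map_C, Polynomial.map_X,
      Polynomial.add_comp, Polynomial.mul_comp, Polynomial.C_comp, Polynomial.X_comp] at h0
    simpa [mul_add, Polynomial.coeff_add, Polynomial.coeff_C_mul, Polynomial.coeff_X_zero,
      Polynomial.coeff_C] using h0
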